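/- Define b^{(l)}_{w₁-1,i} = ((w₁-1)α₁+β₁)/α₂ · Γ(l+β₂/α₂)/Γ(l+1+(w₁α₁+β+1)/α₂) · Γ(i+(w₁α₁+β+1)/α₂)/Γ(i+β₂/α₂) for 1 ≤ i ≤ l. Then for each fixed i ≥ 1, ∑_{l=i}^∞ b^{(l)}_{w₁-1,i} = ((w₁-1)α₁+β₁)/(w₁α₁+β₁+1). -/

import Mathlib

open Real Filter

private lemma gamma_ratio_diff (c d : ℝ) (hc : 0 < c) (hcd : c < d) (n : ℕ) :
    Real.Gamma ((n : ℝ) + c) / Real.Gamma ((n : ℝ) + d) -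
      Real.Gamma (((n + 1 : ℕ) : ℝ) + c) / Real.Gamma (((n + 1 : ℕ) : ℝ) + d) =
    (d - c) / ((n : ℝ) + d) *
      (Real.Gamma ((n : ℝ) + c) / Real.Gamma ((n : ℝ) + d)) := by
  have hd : 0 < d := hc.trans hcd
  have hnc : (0:ℝ) < (n : ℝ) + c := by positivity
  have hnd : (0:ℝ) < (n : ℝ) + d := by positivity
  have h1 : ((n + 1 : ℕ) : ℝ) + c = ((n : ℝ) + c) + 1 := by push_cast; ring
  have h2 : ((n + 1 : ℕ) : ℝ) + d = ((n : ℝ) + d) + 1 := by push_cast; ring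
  rw [h1, h2, Real.Gamma_add_one hnc.ne', Real.Gamma_add_one hnd.ne']
  have hGd : Real.Gamma ((n : ℝ) + d) ≠ 0 := (Real.Gamma_pos_of_pos hnd).ne'
  field_simp
  ring

private lemma gamma_ratio_tendsto_zero (c d : ℝ) (hc : 0 < c) (hcd : c < d) :
    Tendsto (fun n : ℕ => Real.Gamma ((n : ℝ) + c) / Real.Gamma ((n : ℝ) + d))
      atTop (nhds 0) := by
  have hd : 0 < d := hc.trans hcd
  set g : ℕ → ℝ := fun n => Real.Gamma ((n : ℝ) + c) / Real.Gamma ((n : ℝ) + d) with hg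
  have hgpos : ∀ n, 0 < g n := fun n =>
    div_pos (Real.Gamma_pos_of_pos (by positivity)) (Real.Gamma_pos_of_pos (by positivity))
  have hdiff : ∀ n : ℕ, g n - g (n + 1) = (d - c) / ((n : ℝ) + d) * g n :=
    fun n => gamma_ratio_diff c d hc hcd n
  have hant : Antitone g := by
    refine antitone_nat_of_succ_le fun n => ?_
    have h := hdiff n
    nlinarith [hgpos n, hgpos (n + 1), div_nonneg (by linarith : (0:ℝ) ≤ d - c)
      (by positivity : (0:ℝ) ≤ (n : ℝ) + d),
      mul_nonneg (div_nonneg (by linarith : (0:ℝ) ≤ d - c)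
        (by positivity : (0:ℝ) ≤ (n : ℝ) + d)) (hgpos n).le]
  have hbdd : BddBelow (Set.range g) := ⟨0, fun x ⟨n, hn⟩ => hn ▸ (hgpos n).le⟩
  have hL : Tendsto g atTop (nhds (⨅ n, g n)) := tendsto_atTop_ciInf hant hbdd
  set L := ⨅ n, g n with hLdef
  have hL0 : 0 ≤ L := le_ciInf fun n => (hgpos n).le
  have hLle : ∀ n, L ≤ g n := fun n => ciInf_le hbdd n
  have hLzero : L = 0 := by
    by_contra hne
    have hLpos : 0 < L := lt_of_le_of_ne hL0 (Ne.symm hne)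
    -- the telescoping differences are summable
    have hnonneg : ∀ n, 0 ≤ g n - g (n + 1) := fun n => sub_nonneg.mpr (hant (Nat.le_succ n))
    have hsum : HasSum (fun n => g n - g (n + 1)) (g 0 - L) := by
      rw [hasSum_iff_tendsto_nat_of_nonneg hnonneg]
      have : ∀ n : ℕ, ∑ k ∈ Finset.range n, (g k - g (k + 1)) = g 0 - g n :=
        fun n => Finset.sum_range_sub' g n
      simp only [this]
      exact tendsto_const_nhds.sub hL
    have hsummable : Summable (fun n => g n - g (n + 1)) := ⟨_, hsum⟩
    -- comparison with harmonic-type series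
    have hdcp : 0 < d - c := sub_pos.mpr hcd
    have hsum2 : Summable (fun n : ℕ => (d - c) * L * (1 / ((n : ℝ) + d))) := by
      refine Summable.of_nonneg_of_le
        (fun n => mul_nonneg (mul_nonneg hdcp.le hLpos.le) (by positivity)) (fun n => ?_) hsummable
      rw [hdiff n]
      have h1 : (d - c) * L * (1 / ((n : ℝ) + d)) = (d - c) / ((n : ℝ) + d) * L := by
        field_simp
      rw [h1]
      exact mul_le_mul_of_nonneg_left (hLle n)
        (div_nonneg (by linarith) (by positivity))
    have hsum3 : Summable (fun n : ℕ => 1 / ((n : ℝ) + d)) := by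
      have hne' : (d - c) * L ≠ 0 := (mul_pos hdcp hLpos).ne'
      exact (summable_mul_left_iff hne').mp hsum2
    -- but this series diverges
    have hsum4 : Summable (fun n : ℕ => 1 / ((n : ℝ) + 1)) := by
      have hM : Summable (fun n : ℕ => max 1 d * (1 / ((n : ℝ) + d))) := hsum3.mul_left _
      refine Summable.of_nonneg_of_le (fun n => by positivity) (fun n => ?_) hM
      rw [div_le_iff₀ (by positivity), mul_one_div, div_mul_eq_mul_div,
        le_div_iff₀ (by positivity)]
      have h1 : (1:ℝ) ≤ max 1 d := le_max_left _ _
      have h2 : d ≤ max 1 d := le_max_right _ _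
      nlinarith [Nat.cast_nonneg (α := ℝ) n]
    have : Summable (fun n : ℕ => 1 / (n : ℝ)) := by
      rw [← summable_nat_add_iff 1]
      convert hsum4 using 2 with n
      push_cast
      · rfl
      · push_cast
        rfl
    exact Real.not_summable_one_div_natCast this
  rw [hLzero] at hL
  exact hL

theorem sum_b_coeff (α₁ α₂ β₁ β₂ : ℝ) (hα₁ : 0 < α₁) (hα₂ : 0 < α₂)
    (hβ₁ : 0 < β₁) (hβ₂ : 0 < β₂) (w₁ : ℕ) (hw₁ : 1 ≤ w₁)
    (i : ℕ) (hi : 1 ≤ i) (b : ℕ → ℝ)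
    (hb : ∀ l : ℕ,
      b l = (((w₁ : ℝ) - 1) * α₁ + β₁) / α₂ *
        (Real.Gamma ((l : ℝ) + β₂ / α₂) /
          Real.Gamma ((l : ℝ) + 1 + ((w₁ : ℝ) * α₁ + (β₁ + β₂) + 1) / α₂)) *
        (Real.Gamma ((i : ℝ) + ((w₁ : ℝ) * α₁ + (β₁ + β₂) + 1) / α₂) /
          Real.Gamma ((i : ℝ) + β₂ / α₂))) :
    HasSum (fun k : ℕ => b (i + k))
      ((((w₁ : ℝ) - 1) * α₁ + β₁) / ((w₁ : ℝ) * α₁ + β₁ + 1)) := by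
  have hw1 : (1:ℝ) ≤ (w₁ : ℝ) := by exact_mod_cast hw₁
  set c : ℝ := β₂ / α₂ with hcdef
  set d : ℝ := ((w₁ : ℝ) * α₁ + (β₁ + β₂) + 1) / α₂ with hddef
  have hc : 0 < c := by positivity
  have hw₁α₁ : 0 < (w₁ : ℝ) * α₁ := by nlinarith
  have hdc : d - c = ((w₁ : ℝ) * α₁ + β₁ + 1) / α₂ := by
    rw [hcdef, hddef]; field_simp; ring
  have hdcpos : 0 < d - c := by rw [hdc]; positivity
  have hcd : c < d := by linarith
  have hd : 0 < d := hc.trans hcd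
  set A : ℝ := ((w₁ : ℝ) - 1) * α₁ + β₁ with hAdef
  have hA : 0 < A := by nlinarith
  set g : ℕ → ℝ := fun n => Real.Gamma ((n : ℝ) + c) / Real.Gamma ((n : ℝ) + d) with hgdef
  have hgpos : ∀ n, 0 < g n := fun n =>
    div_pos (Real.Gamma_pos_of_pos (by positivity)) (Real.Gamma_pos_of_pos (by positivity))
  set K : ℝ := A / α₂ * (Real.Gamma ((i : ℝ) + d) / Real.Gamma ((i : ℝ) + c)) with hKdef
  have hK : 0 < K := by
    apply mul_pos (by positivity)
    exact div_pos (Real.Gamma_pos_of_pos (by positivity)) (Real.Gamma_pos_of_pos (by positivity))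
  -- express b (i + k) as telescoping difference
  have hbk : ∀ k : ℕ, b (i + k) = K / (d - c) * (g (i + k) - g (i + k + 1)) := by
    intro k
    have hdiff := gamma_ratio_diff c d hc hcd (i + k)
    have hik : (0:ℝ) < ((i + k : ℕ) : ℝ) + d := by positivity
    have hikc : (0:ℝ) < ((i + k : ℕ) : ℝ) + c := by positivity
    have hG1 : Real.Gamma (((i + k : ℕ) : ℝ) + 1 + d) =
        (((i + k : ℕ) : ℝ) + d) * Real.Gamma (((i + k : ℕ) : ℝ) + d) := by
      have : ((i + k : ℕ) : ℝ) + 1 + d = (((i + k : ℕ) : ℝ) + d) + 1 := by ring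
      rw [this, Real.Gamma_add_one hik.ne']
    have hgik : g (i + k) - g (i + k + 1) =
        (d - c) * (Real.Gamma (((i + k : ℕ) : ℝ) + c) /
          Real.Gamma (((i + k : ℕ) : ℝ) + 1 + d)) := by
      rw [hgdef]
      simp only []
      rw [hdiff, hG1]
      have hGd : Real.Gamma (((i + k : ℕ) : ℝ) + d) ≠ 0 :=
        (Real.Gamma_pos_of_pos hik).ne'
      field_simp
    rw [hb (i + k), hgik, hKdef]
    field_simp
  -- partial sums
  have hnonneg : ∀ k, 0 ≤ b (i + k) := by
    intro k
    rw [hbk k]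
    have h1 : g (i + k) - g (i + k + 1) =
        (d - c) / (((i + k : ℕ) : ℝ) + d) * g (i + k) := gamma_ratio_diff c d hc hcd (i + k)
    have h3 : (0:ℝ) < ((i + k : ℕ) : ℝ) + d := by positivity
    have h2 : 0 ≤ g (i + k) - g (i + k + 1) := by
      rw [h1]; exact mul_nonneg (div_nonneg hdcpos.le h3.le) (hgpos _).le
    exact mul_nonneg (div_nonneg hK.le hdcpos.le) h2
  have hpartial : ∀ n : ℕ, ∑ k ∈ Finset.range n, b (i + k) =
      K / (d - c) * (g i - g (i + n)) := by
    intro n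
    have : ∀ k ∈ Finset.range n, b (i + k) = K / (d - c) * (g (i + k) - g (i + k + 1)) :=
      fun k _ => hbk k
    rw [Finset.sum_congr rfl this, ← Finset.mul_sum]
    congr 1
    have := Finset.sum_range_sub' (fun k => g (i + k)) n
    simpa [Nat.add_assoc] using this
  -- limit
  have htend : Tendsto (fun n : ℕ => g (i + n)) atTop (nhds 0) := by
    have h0 := gamma_ratio_tendsto_zero c d hc hcd
    have h1 := h0.comp (tendsto_add_atTop_nat i)
    exact h1.congr (fun n => congrArg g (Nat.add_comm n i))
  have hlim : Tendsto (fun n : ℕ => ∑ k ∈ Finset.range n, b (i + k)) atTop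
      (nhds (K / (d - c) * g i)) := by
    simp only [hpartial]
    have : Tendsto (fun n : ℕ => g i - g (i + n)) atTop (nhds (g i - 0)) :=
      tendsto_const_nhds.sub htend
    rw [sub_zero] at this
    exact (tendsto_const_nhds.mul this).congr (fun n => rfl)
  have hval : K / (d - c) * g i = A / ((w₁ : ℝ) * α₁ + β₁ + 1) := by
    rw [hKdef, hgdef, hdc]
    have hG1 : Real.Gamma ((i : ℝ) + c) ≠ 0 :=
      (Real.Gamma_pos_of_pos (by positivity)).ne'
    have hG2 : Real.Gamma ((i : ℝ) + d) ≠ 0 :=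
      (Real.Gamma_pos_of_pos (by positivity)).ne'
    have hpos : ((w₁ : ℝ) * α₁ + β₁ + 1) ≠ 0 := by positivity
    field_simp
  rw [hasSum_iff_tendsto_nat_of_nonneg hnonneg, ← hval]
  exact hlim
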